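/- Let Ψ be an instance of {1,2}-CSP whose constraint graph G is bipartite. Then P_∞ ⊨ Ψ if and only if G contains no bad walk. -/

import Mathlib

namespace CountingCSP

/-! ## The basic framework

An instance `Ψ` of `{1,2}`-CSP is modelled by a number `m` of variables, the variable set
being `Fin m` with its natural linear order `<` (the order of quantification `≺`), a function
`β : Fin m → ℕ` taking values in `{1,2}` (variable `v` is quantified by `∃^{≥ β v}`), and a
simple graph `G` on `Fin m` (the constraint graph).  A target graph is a type `B` together
with an adjacency relation `E : B → B → Prop` (loops allowed in general). -/

/-- Adjacency of the finite path `P_n` on the vertices `{1,…,n}`, modelled as `Fin n`. -/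
def pathAdj (n : ℕ) (i j : Fin n) : Prop :=
  (i : ℕ) + 1 = j ∨ (j : ℕ) + 1 = i

/-- Adjacency of the infinite path `P_∞` on `ℤ`: `i` and `j` adjacent iff `|i - j| = 1`. -/
def intPathAdj (i j : ℤ) : Prop := |i - j| = 1

/-- `SatFrom β G E i f` : processing the variables of the instance in `≺`-increasing order
starting from variable `i`, where the earlier variables have been assigned according to `f`,
the instance can be satisfied.  At each variable `v` one asks for a set `S` of `β v` distinct
elements of the target such that for every `b ∈ S` the rest of the instance can be satisfied
with `v ↦ b`; when all variables are assigned, the assignment must be a homomorphism. -/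
def SatFrom {m : ℕ} {B : Type*} (β : Fin m → ℕ) (G : SimpleGraph (Fin m))
    (E : B → B → Prop) (i : ℕ) (f : Fin m → B) : Prop :=
  if h : i < m then
    ∃ S : Finset B, S.card = β ⟨i, h⟩ ∧
      ∀ b ∈ S, SatFrom β G E (i + 1) (Function.update f ⟨i, h⟩ b)
  else ∀ u v : Fin m, G.Adj u v → E (f u) (f v)
termination_by m - i
decreasing_by omega

/-- `Sat β G E` : the instance with quantifiers `β` and constraint graph `G` is satisfied by
the target graph with adjacency `E`  (i.e. `H ⊨ Ψ`).  The initial assignment is irrelevant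
since every variable is assigned before it is used. -/
def Sat {m : ℕ} {B : Type*} (β : Fin m → ℕ) (G : SimpleGraph (Fin m))
    (E : B → B → Prop) : Prop :=
  ∀ f : Fin m → B, SatFrom β G E 0 f

/-- A graph is bipartite iff it has a proper 2-colouring. -/
def Bipartite {V : Type*} (G : SimpleGraph V) : Prop :=
  ∃ c : V → Bool, ∀ u v, G.Adj u v → c u ≠ c v

/-! ## Walks, looping walks, and the distance function δ -/

/-- `λ(Q) = |Q| − 2·∑_{interior vertices x of Q} (β x − 1)`, where `|Q|` is the length
(number of edges) of the walk `Q = x₁,…,x_r`, and the interior vertices are `x₂,…,x_{r−1}`. -/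
def lamWalk {m : ℕ} (β : Fin m → ℕ) (Q : List (Fin m)) : ℤ :=
  ((Q.length : ℤ) - 1) - 2 * (((Q.drop 1).dropLast).map (fun x => (β x : ℤ) - 1)).sum

/-- Looping walks of `G` (with respect to the quantification order `<` on `Fin m`):
a walk `x₁,…,x_r` with `x₁ ≠ x_r` such that if `r ≥ 3` then both endpoints strictly precede
every interior vertex and the walk splits at some interior position into two looping walks. -/
inductive IsLoopingWalk {m : ℕ} (G : SimpleGraph (Fin m)) : List (Fin m) → Prop
  | base {x y : Fin m} : G.Adj x y → IsLoopingWalk G [x, y]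
  | comb {x y z : Fin m} {Q₁ Q₂ : List (Fin m)} :
      IsLoopingWalk G (x :: (Q₁ ++ [y])) →
      IsLoopingWalk G (y :: (Q₂ ++ [z])) →
      x ≠ z →
      (∀ w ∈ Q₁ ++ y :: Q₂, x < w ∧ z < w) →
      IsLoopingWalk G (x :: (Q₁ ++ y :: Q₂ ++ [z]))

/-- `Q` is a looping walk between `u` and `v` (in either direction). -/
def LoopingWalkBetween {m : ℕ} (G : SimpleGraph (Fin m)) (u v : Fin m)
    (Q : List (Fin m)) : Prop :=
  IsLoopingWalk G Q ∧
    ((Q.head? = some u ∧ Q.getLast? = some v) ∨ (Q.head? = some v ∧ Q.getLast? = some u))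

/-- `IsDelta G β u v d` : `d = δ(u,v)`, i.e. `d` is the minimum of `λ(Q)` over all looping
walks `Q` of `G` between `u` and `v`.  (`δ(u,v) < ∞` corresponds to `∃ d, IsDelta G β u v d`.) -/
def IsDelta {m : ℕ} (G : SimpleGraph (Fin m)) (β : Fin m → ℕ) (u v : Fin m) (d : ℤ) : Prop :=
  (∃ Q, LoopingWalkBetween G u v Q ∧ lamWalk β Q = d) ∧
    ∀ Q, LoopingWalkBetween G u v Q → d ≤ lamWalk β Q

/-! ## The functions γ and γ′ -/

/-- `IsGammaVal G β g v t` : `t = max(0, max_{u ≺ v, δ(u,v) < ∞} (g u − δ(u,v) + β v − 1))`. -/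
def IsGammaVal {m : ℕ} (G : SimpleGraph (Fin m)) (β : Fin m → ℕ) (g : Fin m → ℤ)
    (v : Fin m) (t : ℤ) : Prop :=
  0 ≤ t ∧
  (∀ u, u < v → ∀ d, IsDelta G β u v d → g u - d + (β v : ℤ) - 1 ≤ t) ∧
  (t = 0 ∨ ∃ u, u < v ∧ ∃ d, IsDelta G β u v d ∧ t = g u - d + (β v : ℤ) - 1)

/-- `g` is the function `γ`: `γ(v) = 0` for the `≺`-least vertex, and otherwise
`γ(v) = β(v) − 1 + max(0, max_{u ≺ v, δ(u,v) < ∞} (γ(u) − δ(u,v) + β(v) − 1))`. -/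
def IsGamma {m : ℕ} (G : SimpleGraph (Fin m)) (β : Fin m → ℕ) (g : Fin m → ℤ) : Prop :=
  ∀ v : Fin m,
    if (v : ℕ) = 0 then g v = 0
    else ∃ t, IsGammaVal G β g v t ∧ g v = (β v : ℤ) - 1 + t

/-- `g` is the function `γ′`:
`γ′(v) = β(v) − 1 + max(0, max_{u ≺ v, δ(u,v) < ∞} (γ′(u) − δ(u,v) + β(v) − 1))`
(so `γ′(v) = β(v) − 1` for the `≺`-least vertex). -/
def IsGamma' {m : ℕ} (G : SimpleGraph (Fin m)) (β : Fin m → ℕ) (g : Fin m → ℤ) : Prop :=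
  ∀ v : Fin m, ∃ t, IsGammaVal G β g v t ∧ g v = (β v : ℤ) - 1 + t

/-! ## The closure sets (F, R⁺, R⁻) for the {2}-CSP(K₄) algorithm -/

mutual
/-- Membership in the closure set `F` of pairs (initialised as the edge set of `G`). -/
inductive InF {m : ℕ} (G : SimpleGraph (Fin m)) : Finset (Fin m) → Prop
  | edge {x y : Fin m} : G.Adj x y → InF G {x, y}
  | x3a {x y w z : Fin m} : [x, y, w, z].Pairwise (· ≠ ·) →
      x < z → y < z → w < z → ¬(x < w ∧ y < w) →
      InF G {w, z} → InRp G {x, y, z} → InF G {x, w}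
  | x3b {x y w z : Fin m} : [x, y, w, z].Pairwise (· ≠ ·) →
      x < z → y < z → w < z → ¬(x < w ∧ y < w) →
      InF G {w, z} → InRp G {x, y, z} → InF G {y, w}
  | x4 {x y w z : Fin m} : [x, y, w, z].Pairwise (· ≠ ·) →
      x < y → w < y → y < z →
      InRp G {x, y, z} → InRm G {w, y, z} → InF G {x, w}
  | x7a {x y q w z : Fin m} : [x, y, q, w, z].Pairwise (· ≠ ·) →
      x < q → y < q → w < q → q < z → ¬(x < w ∧ y < w) →
      InRp G {x, y, z} → InRm G {w, q, z} → InF G {x, w}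
  | x7a' {x y q w z : Fin m} : [x, y, q, w, z].Pairwise (· ≠ ·) →
      x < q → y < q → w < q → q < z → ¬(x < w ∧ y < w) →
      InRm G {x, y, z} → InRp G {w, q, z} → InF G {x, w}
  | x7b {x y q w z : Fin m} : [x, y, q, w, z].Pairwise (· ≠ ·) →
      x < q → y < q → w < q → q < z → ¬(x < w ∧ y < w) →
      InRp G {x, y, z} → InRm G {w, q, z} → InF G {y, w}
  | x7b' {x y q w z : Fin m} : [x, y, q, w, z].Pairwise (· ≠ ·) →
      x < q → y < q → w < q → q < z → ¬(x < w ∧ y < w) →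
      InRm G {x, y, z} → InRp G {w, q, z} → InF G {y, w}

/-- Membership in the closure set `R⁺` of triples. -/
inductive InRp {m : ℕ} (G : SimpleGraph (Fin m)) : Finset (Fin m) → Prop
  | x2 {x y w z : Fin m} : [x, y, w, z].Pairwise (· ≠ ·) →
      x < z → y < z → w < z →
      InF G {w, z} → InRm G {x, y, z} → InRp G {x, y, w}
  | x4 {x y w z : Fin m} : [x, y, w, z].Pairwise (· ≠ ·) →
      x < y → w < y → y < z →
      InRp G {x, y, z} → InRm G {w, y, z} → InRp G {x, y, w}
  | x5p {x y w z : Fin m} : [x, y, w, z].Pairwise (· ≠ ·) →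
      x < z → y < z → w < z →
      InRp G {x, y, z} → InRp G {w, y, z} → InRp G {x, y, w}
  | x5m {x y w z : Fin m} : [x, y, w, z].Pairwise (· ≠ ·) →
      x < z → y < z → w < z →
      InRm G {x, y, z} → InRm G {w, y, z} → InRp G {x, y, w}
  | x6ap {x y q w z : Fin m} : [x, y, q, w, z].Pairwise (· ≠ ·) →
      x < q → y < q → w < q → q < z →
      InRp G {x, y, z} → InRp G {w, q, z} → InRp G {x, y, w}
  | x6am {x y q w z : Fin m} : [x, y, q, w, z].Pairwise (· ≠ ·) →
      x < q → y < q → w < q → q < z →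
      InRm G {x, y, z} → InRm G {w, q, z} → InRp G {x, y, w}
  | x6bp {x y q w z : Fin m} : [x, y, q, w, z].Pairwise (· ≠ ·) →
      x < q → y < q → w < q → q < z →
      InRp G {x, y, z} → InRp G {w, q, z} → InRp G {x, y, q}
  | x6bm {x y q w z : Fin m} : [x, y, q, w, z].Pairwise (· ≠ ·) →
      x < q → y < q → w < q → q < z →
      InRm G {x, y, z} → InRm G {w, q, z} → InRp G {x, y, q}

/-- Membership in the closure set `R⁻` of triples. -/
inductive InRm {m : ℕ} (G : SimpleGraph (Fin m)) : Finset (Fin m) → Prop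
  | x1 {x y z : Fin m} : [x, y, z].Pairwise (· ≠ ·) →
      x < z → y < z →
      InF G {x, z} → InF G {y, z} → InRm G {x, y, z}
  | x3 {x y w z : Fin m} : [x, y, w, z].Pairwise (· ≠ ·) →
      x < z → y < z → w < z → x < w → y < w →
      InF G {w, z} → InRp G {x, y, z} → InRm G {x, y, w}
  | x7a {x y q w z : Fin m} : [x, y, q, w, z].Pairwise (· ≠ ·) →
      x < q → y < q → w < q → q < z →
      InRp G {x, y, z} → InRm G {w, q, z} → InRm G {x, y, q}
  | x7a' {x y q w z : Fin m} : [x, y, q, w, z].Pairwise (· ≠ ·) →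
      x < q → y < q → w < q → q < z →
      InRm G {x, y, z} → InRp G {w, q, z} → InRm G {x, y, q}
  | x7b {x y q w z : Fin m} : [x, y, q, w, z].Pairwise (· ≠ ·) →
      x < q → y < q → w < q → q < z → x < w → y < w →
      InRp G {x, y, z} → InRm G {w, q, z} → InRm G {x, y, w}
  | x7b' {x y q w z : Fin m} : [x, y, q, w, z].Pairwise (· ≠ ·) →
      x < q → y < q → w < q → q < z → x < w → y < w →
      InRm G {x, y, z} → InRp G {w, q, z} → InRm G {x, y, w}
end



section AuxWalk

variable {m : ℕ} {β : Fin m → ℕ} {G : SimpleGraph (Fin m)}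

lemma shape_getLast? (x z : Fin m) (M : List (Fin m)) :
    (x :: (M ++ [z])).getLast? = some z := by
  rw [← List.cons_append]; exact List.getLast?_concat

lemma getLast?_pair (a b : Fin m) : ([a, b] : List (Fin m)).getLast? = some b := rfl

lemma interior_shape (x z : Fin m) (M : List (Fin m)) :
    ((x :: (M ++ [z])).drop 1).dropLast = M := by simp

lemma assoc3 (Q₁ Q₂ : List (Fin m)) (y z : Fin m) :
    Q₁ ++ y :: Q₂ ++ [z] = (Q₁ ++ y :: Q₂) ++ [z] := by simp

lemma lw_shape {Q : List (Fin m)} (h : IsLoopingWalk G Q) :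
    ∃ x M z, Q = x :: (M ++ [z]) := by
  cases h with
  | base h => exact ⟨_, [], _, rfl⟩
  | comb h1 h2 hne hlt => exact ⟨_, _ ++ _ :: _, _, by rw [assoc3]⟩

lemma lw_head_ne_last {Q : List (Fin m)} {x z : Fin m} (h : IsLoopingWalk G Q)
    (hx : Q.head? = some x) (hz : Q.getLast? = some z) : x ≠ z := by
  cases h with
  | base hadj =>
      simp only [List.head?_cons, Option.some.injEq] at hx
      rw [getLast?_pair] at hz
      simp only [Option.some.injEq] at hz
      rw [← hx, ← hz]; exact hadj.ne
  | @comb a y b Q₁ Q₂ h1 h2 hne hlt =>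
      simp only [List.head?_cons, Option.some.injEq] at hx
      rw [assoc3, shape_getLast?] at hz
      simp only [Option.some.injEq] at hz
      rw [← hx, ← hz]; exact hne

lemma lw_interior_gt {Q : List (Fin m)} {x z : Fin m} (h : IsLoopingWalk G Q)
    (hx : Q.head? = some x) (hz : Q.getLast? = some z) :
    ∀ w ∈ (Q.drop 1).dropLast, x < w ∧ z < w := by
  cases h with
  | base hadj => intro w hw; simp at hw
  | @comb a y b Q₁ Q₂ h1 h2 hne hlt =>
      simp only [List.head?_cons, Option.some.injEq] at hx
      rw [assoc3, shape_getLast?] at hz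
      simp only [Option.some.injEq] at hz
      intro w hw
      rw [assoc3, interior_shape] at hw
      rw [← hx, ← hz]
      exact hlt w hw

lemma lam_shape (β : Fin m → ℕ) (x z : Fin m) (M : List (Fin m)) :
    lamWalk β (x :: (M ++ [z])) =
      (M.length : ℤ) + 1 - 2 * (M.map (fun w => (β w : ℤ) - 1)).sum := by
  unfold lamWalk
  rw [interior_shape]
  simp only [List.length_cons, List.length_append, List.length_singleton,
    List.length_nil]
  push_cast
  ring

lemma lam_base (x z : Fin m) : lamWalk β ([x, z] : List (Fin m)) = 1 := by
  rw [show ([x, z] : List (Fin m)) = x :: ([] ++ [z]) from rfl, lam_shape]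
  simp

lemma lam_comb (β : Fin m → ℕ) (x y z : Fin m) (Q₁ Q₂ : List (Fin m)) :
    lamWalk β (x :: (Q₁ ++ y :: Q₂ ++ [z])) =
      lamWalk β (x :: (Q₁ ++ [y])) + lamWalk β (y :: (Q₂ ++ [z])) - 2 * ((β y : ℤ) - 1) := by
  rw [assoc3, lam_shape, lam_shape, lam_shape]
  simp only [List.map_append, List.map_cons, List.sum_append, List.sum_cons,
    List.length_append, List.length_cons]
  push_cast
  ring

lemma lw_reverse {Q : List (Fin m)} (h : IsLoopingWalk G Q) :
    IsLoopingWalk G Q.reverse := by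
  induction h with
  | @base x y hadj =>
      rw [show ([x, y] : List (Fin m)).reverse = [y, x] by simp]
      exact .base hadj.symm
  | @comb x y z Q₁ Q₂ h1 h2 hne hlt ih1 ih2 =>
      rw [show (x :: (Q₁ ++ y :: Q₂ ++ [z])).reverse
            = z :: (Q₂.reverse ++ y :: Q₁.reverse ++ [x]) by simp] at *
      rw [show (x :: (Q₁ ++ [y])).reverse = y :: (Q₁.reverse ++ [x]) by simp] at ih1
      rw [show (y :: (Q₂ ++ [z])).reverse = z :: (Q₂.reverse ++ [y]) by simp] at ih2
      refine IsLoopingWalk.comb ih2 ih1 hne.symm ?_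
      intro w hw
      have hw' : w ∈ Q₁ ++ y :: Q₂ := by
        simp only [List.mem_append, List.mem_cons, List.mem_reverse] at hw ⊢
        tauto
      exact ⟨(hlt w hw').2, (hlt w hw').1⟩

lemma lam_reverse {Q : List (Fin m)} (h : IsLoopingWalk G Q) :
    lamWalk β Q.reverse = lamWalk β Q := by
  obtain ⟨x, M, z, rfl⟩ := lw_shape h
  rw [show (x :: (M ++ [z])).reverse = z :: (M.reverse ++ [x]) by simp,
    lam_shape, lam_shape]
  simp [List.sum_reverse]

lemma interior_reverse {Q : List (Fin m)} (h : IsLoopingWalk G Q) {w : Fin m} :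
    w ∈ (Q.reverse.drop 1).dropLast ↔ w ∈ (Q.drop 1).dropLast := by
  obtain ⟨x, M, z, rfl⟩ := lw_shape h
  rw [show (x :: (M ++ [z])).reverse = z :: (M.reverse ++ [x]) by simp,
    interior_shape, interior_shape]
  simp

/-- integer color of a vertex -/
def colZ {m : ℕ} (c : Fin m → Bool) (u : Fin m) : ℤ := if c u then 1 else 0

lemma lw_parity {c : Fin m → Bool} (hc : ∀ u v, G.Adj u v → c u ≠ c v)
    {Q : List (Fin m)} {x z : Fin m} (h : IsLoopingWalk G Q)
    (hx : Q.head? = some x) (hz : Q.getLast? = some z) :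
    2 ∣ ((Q.length : ℤ) - 1 + colZ c x + colZ c z) := by
  induction h generalizing x z with
  | @base a b hadj =>
      simp only [List.head?_cons, Option.some.injEq] at hx
      rw [getLast?_pair] at hz
      simp only [Option.some.injEq] at hz
      rw [← hx, ← hz]
      have hne := hc _ _ hadj
      cases h1 : c a <;> cases h2 : c b <;>
        simp [colZ, h1, h2] at hne ⊢ <;> omega
  | @comb a y b Q₁ Q₂ h1 h2 hne hlt ih1 ih2 =>
      simp only [List.head?_cons, Option.some.injEq] at hx
      rw [assoc3, shape_getLast?] at hz
      simp only [Option.some.injEq] at hz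
      rw [← hx, ← hz]
      have e1 := ih1 (x := a) (z := y) rfl (shape_getLast? _ _ _)
      have e2 := ih2 (x := y) (z := b) rfl (shape_getLast? _ _ _)
      have l1 : ((a :: (Q₁ ++ [y])).length : ℤ) = (Q₁.length : ℤ) + 2 := by
        simp only [List.length_cons, List.length_append, List.length_singleton,
          List.length_nil]
        push_cast; ring
      have l2 : ((y :: (Q₂ ++ [b])).length : ℤ) = (Q₂.length : ℤ) + 2 := by
        simp only [List.length_cons, List.length_append, List.length_singleton,
          List.length_nil]
        push_cast; ring
      rw [l1] at e1; rw [l2] at e2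
      have l3 : ((a :: (Q₁ ++ y :: Q₂ ++ [b])).length : ℤ)
          = (Q₁.length : ℤ) + (Q₂.length : ℤ) + 3 := by
        simp only [List.length_cons, List.length_append, List.length_singleton,
          List.length_nil]
        push_cast
        ring
      rw [l3]
      omega

lemma lam_length_parity (β : Fin m → ℕ) (Q : List (Fin m)) :
    2 ∣ (lamWalk β Q - ((Q.length : ℤ) - 1)) :=
  ⟨-((Q.drop 1).dropLast.map (fun w => (β w : ℤ) - 1)).sum, by unfold lamWalk; ring⟩

end AuxWalk

section Adversary

variable {m : ℕ} {β : Fin m → ℕ} {G : SimpleGraph (Fin m)}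

lemma ne_mk {u : Fin m} {i : ℕ} (him : i < m) (h : (u : ℕ) ≠ i) : u ≠ ⟨i, him⟩ :=
  Fin.ne_of_val_ne (by simpa using h)

lemma not_satFrom_violated (hβ : ∀ v, β v = 1 ∨ β v = 2) {u v : Fin m} (hadj : G.Adj u v) :
    ∀ k i (f : Fin m → ℤ), m - i ≤ k → ¬ intPathAdj (f u) (f v) → (u : ℕ) < i →
      (v : ℕ) < i → ¬ SatFrom β G intPathAdj i f := by
  intro k
  induction k with
  | zero =>
      intro i f hk hviol hu hv hsat
      rw [SatFrom, dif_neg (by omega)] at hsat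
      exact hviol (hsat u v hadj)
  | succ k ih =>
      intro i f hk hviol hu hv hsat
      by_cases him : i < m
      · rw [SatFrom, dif_pos him] at hsat
        obtain ⟨S, hcard, hall⟩ := hsat
        have hpos : 0 < S.card := by rw [hcard]; rcases hβ ⟨i, him⟩ with h | h <;> omega
        obtain ⟨b, hb⟩ := Finset.card_pos.mp hpos
        refine ih (i + 1) _ (by omega) ?_ (by omega) (by omega) (hall b hb)
        rwa [Function.update_of_ne (ne_mk him (by omega)),
          Function.update_of_ne (ne_mk him (by omega))]
      · rw [SatFrom, dif_neg him] at hsat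
        exact hviol (hsat u v hadj)

/-- Adversary lemma: if the two endpoints of a looping walk whose interior is not yet
assigned carry values which are too far apart (or have wrong parity), the instance
cannot be satisfied. -/
lemma adv (hβ : ∀ v, β v = 1 ∨ β v = 2) :
    ∀ k i (f : Fin m → ℤ) (Q : List (Fin m)) (x z : Fin m), m - i ≤ k →
      IsLoopingWalk G Q → Q.head? = some x → Q.getLast? = some z →
      (x : ℕ) < i → (z : ℕ) < i → (∀ w ∈ (Q.drop 1).dropLast, i ≤ (w : ℕ)) →
      (lamWalk β Q < |f x - f z| ∨ ¬ (2 ∣ (f x - f z - ((Q.length : ℤ) - 1)))) →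
      ¬ SatFrom β G intPathAdj i f := by
  intro k
  induction k with
  | zero =>
      intro i f Q x z hk hQ hx hz hxi hzi hint hbad
      cases hQ with
      | @base a b hadj =>
          simp only [List.head?_cons, Option.some.injEq] at hx
          rw [getLast?_pair] at hz
          simp only [Option.some.injEq] at hz
          rw [← hx, ← hz] at hbad
          refine not_satFrom_violated hβ hadj 0 i f (by omega) ?_ (by omega) (by omega)
          intro hpath
          unfold intPathAdj at hpath
          rw [lam_base] at hbad
          have hlen : (([a, b] : List (Fin m)).length : ℤ) = 2 := by simp
          rw [hlen] at hbad
          rcases (abs_eq (by norm_num)).mp hpath with h | h <;>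
            rcases hbad with h' | h' <;> rw [h] at h' <;> simp at h' <;> omega
      | @comb a y b Q₁ Q₂ h1 h2 hne hlt =>
          -- the interior is nonempty and has index ≥ i, but i ≥ m : contradiction
          have hy : y ∈ ((a :: (Q₁ ++ y :: Q₂ ++ [b])).drop 1).dropLast := by
            rw [assoc3, interior_shape]; simp
          have := hint y hy
          have := y.isLt
          omega
  | succ k ih =>
      intro i f Q x z hk hQ hx hz hxi hzi hint hbad
      cases hQ with
      | @base a b hadj =>
          simp only [List.head?_cons, Option.some.injEq] at hx
          rw [getLast?_pair] at hz
          simp only [Option.some.injEq] at hz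
          rw [← hx, ← hz] at hbad
          refine not_satFrom_violated hβ hadj (k+1) i f (by omega) ?_ (by omega) (by omega)
          intro hpath
          unfold intPathAdj at hpath
          rw [lam_base] at hbad
          have hlen : (([a, b] : List (Fin m)).length : ℤ) = 2 := by simp
          rw [hlen] at hbad
          rcases (abs_eq (by norm_num)).mp hpath with h | h <;>
            rcases hbad with h' | h' <;> rw [h] at h' <;> simp at h' <;> omega
      | @comb a y b Q₁ Q₂ h1 h2 hne hlt =>
          simp only [List.head?_cons, Option.some.injEq] at hx
          rw [assoc3, shape_getLast?] at hz
          simp only [Option.some.injEq] at hz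
          -- interior facts
          have hintQ : ∀ w ∈ Q₁ ++ y :: Q₂, i ≤ (w : ℕ) := by
            intro w hw
            apply hint
            rw [assoc3, interior_shape]
            exact hw
          have hyi : i ≤ (y : ℕ) := hintQ y (by simp)
          have him : i < m := lt_of_le_of_lt hyi y.isLt
          have hQ1gt : ∀ w ∈ Q₁, y < w := by
            intro w hw
            exact (lw_interior_gt h1 rfl (shape_getLast? _ _ _) w
              (by rw [interior_shape]; exact hw)).2
          have hQ2gt : ∀ w ∈ Q₂, y < w := by
            intro w hw
            exact (lw_interior_gt h2 rfl (shape_getLast? _ _ _) w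
              (by rw [interior_shape]; exact hw)).1
          rw [SatFrom, dif_pos him]
          rintro ⟨S, hcard, hall⟩
          by_cases hyeq : y = ⟨i, him⟩
          · -- the current variable is the splitting vertex y
            have hyv : (y : ℕ) = i := by rw [hyeq]
            -- find a bad value in S
            set lam1 := lamWalk β (a :: (Q₁ ++ [y])) with hl1
            set lam2 := lamWalk β (y :: (Q₂ ++ [b])) with hl2
            have hlc : lamWalk β (a :: (Q₁ ++ y :: Q₂ ++ [b]))
                = lam1 + lam2 - 2 * ((β y : ℤ) - 1) := lam_comb β a y b Q₁ Q₂
            have hL1 : ((a :: (Q₁ ++ [y])).length : ℤ) = (Q₁.length : ℤ) + 2 := by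
              simp only [List.length_cons, List.length_append, List.length_singleton,
                List.length_nil]; push_cast; ring
            have hL2 : ((y :: (Q₂ ++ [b])).length : ℤ) = (Q₂.length : ℤ) + 2 := by
              simp only [List.length_cons, List.length_append, List.length_singleton,
                List.length_nil]; push_cast; ring
            have hL : ((a :: (Q₁ ++ y :: Q₂ ++ [b])).length : ℤ)
                = (Q₁.length : ℤ) + (Q₂.length : ℤ) + 3 := by
              simp only [List.length_cons, List.length_append, List.length_singleton,
                List.length_nil]; push_cast; ring
            have hfind : ∃ b' ∈ S,
                (lam1 < |f x - b'| ∨ ¬ (2 ∣ (f x - b' - (((a :: (Q₁ ++ [y])).length : ℤ) - 1))))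
                ∨ (lam2 < |b' - f z| ∨
                  ¬ (2 ∣ (b' - f z - (((y :: (Q₂ ++ [b])).length : ℤ) - 1)))) := by
              by_contra hcon
              push_neg at hcon
              rw [← hx, ← hz] at hcon
              rw [hlc, hL] at hbad
              rw [← hx, ← hz] at hbad
              have habs : lam1 + lam2 - 2 * ((β y : ℤ) - 1) < f a - f b
                  ∨ lam1 + lam2 - 2 * ((β y : ℤ) - 1) < -(f a - f b)
                  ∨ ¬ (2 ∣ (f a - f b - ((Q₁.length : ℤ) + (Q₂.length : ℤ) + 3 - 1))) := by
                rcases hbad with h | h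
                · rcases lt_abs.mp h with h | h
                  · exact Or.inl h
                  · exact Or.inr (Or.inl h)
                · exact Or.inr (Or.inr h)
              rcases hβ y with hb1 | hb2
              · -- β y = 1 : a single value
                rw [show (⟨i, him⟩ : Fin m) = y from hyeq.symm, hb1] at hcard
                obtain ⟨b', hb'⟩ := Finset.card_eq_one.mp hcard
                have hgood := hcon b' (by rw [hb']; simp)
                obtain ⟨⟨hg1, hg2⟩, hg3, hg4⟩ := hgood
                rw [hL1] at hg2; rw [hL2] at hg4
                have ha1 := abs_le.mp hg1
                have ha3 := abs_le.mp hg3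
                omega
              · -- β y = 2 : two distinct values
                rw [show (⟨i, him⟩ : Fin m) = y from hyeq.symm, hb2] at hcard
                obtain ⟨b₁, b₂, hbne, hb'⟩ := Finset.card_eq_two.mp hcard
                have hgood1 := hcon b₁ (by rw [hb']; simp)
                have hgood2 := hcon b₂ (by rw [hb']; simp)
                obtain ⟨⟨p1, p2⟩, p3, p4⟩ := hgood1
                obtain ⟨⟨q1, q2⟩, q3, q4⟩ := hgood2
                rw [hL1] at p2 q2; rw [hL2] at p4 q4
                have pa1 := abs_le.mp p1
                have pa3 := abs_le.mp p3
                have qa1 := abs_le.mp q1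
                have qa3 := abs_le.mp q3
                omega
            obtain ⟨b', hb'S, hbad'⟩ := hfind
            have hupx : Function.update f ⟨i, him⟩ b' x = f x :=
              Function.update_of_ne (ne_mk him (by omega)) _ _
            have hupz : Function.update f ⟨i, him⟩ b' z = f z :=
              Function.update_of_ne (ne_mk him (by omega)) _ _
            have hupy : Function.update f ⟨i, him⟩ b' y = b' := by
              rw [hyeq]; exact Function.update_self _ _ _
            rcases hbad' with hbad1 | hbad2
            · refine ih (i+1) _ (a :: (Q₁ ++ [y])) x y (by omega) h1 ?_ ?_ (by omega) ?_ ?_ ?_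
                (hall b' hb'S)
              · rw [← hx]; rfl
              · exact shape_getLast? _ _ _
              · omega
              · intro w hw
                rw [interior_shape] at hw
                have := hQ1gt w hw
                have : (y : ℕ) < (w : ℕ) := this
                omega
              · rw [hupx, hupy]
                exact hbad1
            · refine ih (i+1) _ (y :: (Q₂ ++ [b])) y z (by omega) h2 rfl
                (by rw [← hz]; exact shape_getLast? _ _ _) ?_ (by omega) ?_ ?_ (hall b' hb'S)
              · omega
              · intro w hw
                rw [interior_shape] at hw
                have : (y : ℕ) < (w : ℕ) := hQ2gt w hw
                omega
              · rw [hupy, hupz]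
                exact hbad2
          · -- the current variable is not in the walk: play anything
            have hpos : 0 < S.card := by rw [hcard]; rcases hβ ⟨i, him⟩ with h | h <;> omega
            obtain ⟨b', hb'⟩ := Finset.card_pos.mp hpos
            have hyne : (y : ℕ) ≠ i := fun h => hyeq (Fin.ext h)
            refine ih (i+1) _ (a :: (Q₁ ++ y :: Q₂ ++ [b])) x z (by omega)
              (IsLoopingWalk.comb h1 h2 hne hlt) (by rw [← hx]; rfl)
              (by rw [assoc3, shape_getLast?]; exact congrArg some hz)
              (by omega) (by omega) ?_ ?_ (hall b' hb')
            · intro w hw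
              rw [assoc3, interior_shape] at hw
              rcases List.mem_append.mp hw with hw1 | hw2
              · have hyw : (y : ℕ) < (w : ℕ) := hQ1gt w hw1
                omega
              · rcases List.mem_cons.mp hw2 with rfl | hw3
                · omega
                · have hyw : (y : ℕ) < (w : ℕ) := hQ2gt w hw3
                  omega
            · rwa [Function.update_of_ne (ne_mk him (by omega)),
                Function.update_of_ne (ne_mk him (by omega))]

end Adversary

section DirOne

variable {m : ℕ} {β : Fin m → ℕ} {G : SimpleGraph (Fin m)}

lemma dir1 (hβ : ∀ v, β v = 1 ∨ β v = 2) {Q : List (Fin m)} {u v : Fin m}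
    (hQ : IsLoopingWalk G Q) (hh : Q.head? = some u) (hl : Q.getLast? = some v)
    (huv : u < v) (hlam : lamWalk β Q ≤ (β v : ℤ) - 2) :
    ∀ k i (f : Fin m → ℤ), m - i ≤ k → i ≤ (v : ℕ) → ¬ SatFrom β G intPathAdj i f := by
  have huvn : (u : ℕ) < (v : ℕ) := huv
  intro k
  induction k with
  | zero =>
      intro i f hk hiv
      have := v.isLt
      omega
  | succ k ih =>
      intro i f hk hiv hsat
      have him : i < m := lt_of_le_of_lt hiv v.isLt
      rw [SatFrom, dif_pos him] at hsat
      obtain ⟨S, hcard, hall⟩ := hsat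
      by_cases hveq : (v : ℕ) = i
      · -- current variable is v : find a value far from f u
        have hveq' : v = ⟨i, him⟩ := Fin.ext hveq
        have hβv : β ⟨i, him⟩ = β v := by rw [hveq']
        have hfind : ∃ b ∈ S, lamWalk β Q < |f u - b| := by
          rcases hβ v with h1 | h1
          · have : S.card = 1 := by rw [hcard, hβv, h1]
            obtain ⟨b, hb⟩ := Finset.card_eq_one.mp this
            refine ⟨b, by rw [hb]; simp, ?_⟩
            have : lamWalk β Q ≤ -1 := by omega
            have := abs_nonneg (f u - b)
            omega
          · have : S.card = 2 := by rw [hcard, hβv, h1]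
            obtain ⟨b₁, b₂, hbne, hb⟩ := Finset.card_eq_two.mp this
            by_cases hb1 : lamWalk β Q < |f u - b₁|
            · exact ⟨b₁, by rw [hb]; simp, hb1⟩
            · refine ⟨b₂, by rw [hb]; simp, ?_⟩
              push_neg at hb1
              have h0 : lamWalk β Q ≤ 0 := by omega
              have ha1 := abs_le.mp (le_trans hb1 h0)
              have : b₁ = f u := by omega
              have : |f u - b₂| ≥ 1 := by
                rcases abs_cases (f u - b₂) with ⟨h', _⟩ | ⟨h', _⟩ <;> omega
              omega
        obtain ⟨b, hbS, hbad⟩ := hfind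
        refine adv hβ k (i+1) _ Q u v (by omega) hQ hh hl (by omega) (by omega) ?_ ?_
          (hall b hbS)
        · intro w hw
          have := (lw_interior_gt hQ hh hl w hw).2
          have : (v : ℕ) < (w : ℕ) := this
          omega
        · left
          rw [Function.update_of_ne (ne_mk him (by omega)), ← hveq',
            Function.update_self]
          exact hbad
      · -- current variable comes before v : play anything
        have hpos : 0 < S.card := by rw [hcard]; rcases hβ ⟨i, him⟩ with h | h <;> omega
        obtain ⟨b, hb⟩ := Finset.card_pos.mp hpos
        exact ih (i+1) _ (by omega) (by omega) (hall b hb)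

end DirOne

section DirTwo

variable {m : ℕ} {β : Fin m → ℕ} {G : SimpleGraph (Fin m)}

lemma eq_mk {u : Fin m} {i : ℕ} (him : i < m) (h : (u : ℕ) = i) : u = ⟨i, him⟩ :=
  Fin.ext (by simpa using h)

/-- The invariant maintained by the prover's strategy. -/
def Inv {m : ℕ} (β : Fin m → ℕ) (G : SimpleGraph (Fin m)) (i : ℕ) (f : Fin m → ℤ) : Prop :=
  ∀ (Q : List (Fin m)) (u u' : Fin m), IsLoopingWalk G Q → Q.head? = some u →
    Q.getLast? = some u' → (u : ℕ) < i → (u' : ℕ) < i →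
    (∀ w ∈ (Q.drop 1).dropLast, i ≤ (w : ℕ)) → |f u - f u'| ≤ lamWalk β Q

/-- A constraint on the value of the variable `v` (the variable currently being assigned):
`u` is an already assigned variable and `Q` is a looping walk between `u` and `v` whose
interior is still unassigned. -/
def Con {m : ℕ} (G : SimpleGraph (Fin m)) (i : ℕ) (v u : Fin m) (Q : List (Fin m)) : Prop :=
  (u : ℕ) < i ∧ IsLoopingWalk G Q ∧
    ((Q.head? = some u ∧ Q.getLast? = some v) ∨ (Q.head? = some v ∧ Q.getLast? = some u)) ∧
    ∀ w ∈ (Q.drop 1).dropLast, i + 1 ≤ (w : ℕ)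

lemma con_orient {i : ℕ} {v u : Fin m} {Q : List (Fin m)} (hC : Con G i v u Q) :
    ∃ A, IsLoopingWalk G (u :: (A ++ [v])) ∧ lamWalk β (u :: (A ++ [v])) = lamWalk β Q ∧
      ∀ w ∈ A, i + 1 ≤ (w : ℕ) := by
  obtain ⟨hu, hQ, hor, hint⟩ := hC
  rcases hor with ⟨h1, h2⟩ | ⟨h1, h2⟩
  · obtain ⟨x, M, z, rfl⟩ := lw_shape hQ
    simp only [List.head?_cons, Option.some.injEq] at h1
    rw [shape_getLast?] at h2
    simp only [Option.some.injEq] at h2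
    subst h1; subst h2
    exact ⟨M, hQ, rfl, fun w hw => hint w (by rw [interior_shape]; exact hw)⟩
  · have hQR := lw_reverse hQ
    have h1R : Q.reverse.head? = some u := by rw [List.head?_reverse]; exact h2
    have h2R : Q.reverse.getLast? = some v := by rw [List.getLast?_reverse]; exact h1
    have hlamR := lam_reverse (β := β) hQ
    have hiR := fun (w : Fin m) => interior_reverse (w := w) hQ
    obtain ⟨x, M, z, hsh⟩ := lw_shape hQR
    rw [hsh] at h1R h2R hQR hlamR hiR
    simp only [List.head?_cons, Option.some.injEq] at h1R
    rw [shape_getLast?] at h2R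
    simp only [Option.some.injEq] at h2R
    subst h1R; subst h2R
    refine ⟨M, hQR, hlamR, ?_⟩
    intro w hw
    apply hint
    rw [← hiR w, interior_shape]
    exact hw

lemma con_orient' {i : ℕ} {v u : Fin m} {Q : List (Fin m)} (hC : Con G i v u Q) :
    ∃ B, IsLoopingWalk G (v :: (B ++ [u])) ∧ lamWalk β (v :: (B ++ [u])) = lamWalk β Q ∧
      ∀ w ∈ B, i + 1 ≤ (w : ℕ) := by
  obtain ⟨hu, hQ, hor, hint⟩ := hC
  rcases hor with ⟨h1, h2⟩ | ⟨h1, h2⟩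
  · have hQR := lw_reverse hQ
    have h1R : Q.reverse.head? = some v := by rw [List.head?_reverse]; exact h2
    have h2R : Q.reverse.getLast? = some u := by rw [List.getLast?_reverse]; exact h1
    have hlamR := lam_reverse (β := β) hQ
    have hiR := fun (w : Fin m) => interior_reverse (w := w) hQ
    obtain ⟨x, M, z, hsh⟩ := lw_shape hQR
    rw [hsh] at h1R h2R hQR hlamR hiR
    simp only [List.head?_cons, Option.some.injEq] at h1R
    rw [shape_getLast?] at h2R
    simp only [Option.some.injEq] at h2R
    subst h1R; subst h2R
    refine ⟨M, hQR, hlamR, ?_⟩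
    intro w hw
    apply hint
    rw [← hiR w, interior_shape]
    exact hw
  · obtain ⟨x, M, z, rfl⟩ := lw_shape hQ
    simp only [List.head?_cons, Option.some.injEq] at h1
    rw [shape_getLast?] at h2
    simp only [Option.some.injEq] at h2
    subst h1; subst h2
    exact ⟨M, hQ, rfl, fun w hw => hint w (by rw [interior_shape]; exact hw)⟩

lemma con_combine {i : ℕ} {v : Fin m} (hvi : (v : ℕ) = i) {f : Fin m → ℤ}
    (hINV : Inv β G i f) {u₀ u₁ : Fin m} {Q₀ Q₁ : List (Fin m)}
    (h₀ : Con G i v u₀ Q₀) (h₁ : Con G i v u₁ Q₁) (hne : u₀ ≠ u₁) :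
    f u₀ - f u₁ ≤ lamWalk β Q₀ + lamWalk β Q₁ - 2 * ((β v : ℤ) - 1) := by
  obtain ⟨A, hA, hlamA, hintA⟩ := con_orient h₀
  obtain ⟨B, hB, hlamB, hintB⟩ := con_orient' h₁
  have hu₀ : (u₀ : ℕ) < i := h₀.1
  have hu₁ : (u₁ : ℕ) < i := h₁.1
  have hlt : ∀ w ∈ A ++ v :: B, u₀ < w ∧ u₁ < w := by
    intro w hw
    rcases List.mem_append.mp hw with hw1 | hw2
    · have := hintA w hw1
      exact ⟨show (u₀ : ℕ) < (w : ℕ) by omega, show (u₁ : ℕ) < (w : ℕ) by omega⟩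
    · rcases List.mem_cons.mp hw2 with rfl | hw3
      · exact ⟨show (u₀ : ℕ) < (w : ℕ) by omega, show (u₁ : ℕ) < (w : ℕ) by omega⟩
      · have := hintB w hw3
        exact ⟨show (u₀ : ℕ) < (w : ℕ) by omega, show (u₁ : ℕ) < (w : ℕ) by omega⟩
  have hcomb := IsLoopingWalk.comb hA hB hne hlt
  have hIW := hINV _ u₀ u₁ hcomb rfl (by rw [assoc3]; exact shape_getLast? _ _ _)
    (by omega) (by omega) ?_
  · rw [lam_comb, hlamA, hlamB] at hIW
    have := le_abs_self (f u₀ - f u₁)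
    omega
  · intro w hw
    rw [assoc3, interior_shape] at hw
    rcases List.mem_append.mp hw with hw1 | hw2
    · have := hintA w hw1; omega
    · rcases List.mem_cons.mp hw2 with rfl | hw3
      · omega
      · have := hintB w hw3; omega

lemma sat_end {c : Fin m → Bool} (hc : ∀ u v, G.Adj u v → c u ≠ c v)
    (i : ℕ) (f : Fin m → ℤ) (him : ¬ i < m)
    (hPAR : ∀ u : Fin m, (u : ℕ) < i → 2 ∣ (f u - colZ c u))
    (hINV : Inv β G i f) : SatFrom β G intPathAdj i f := by
  rw [SatFrom, dif_neg him]
  intro p q hadj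
  have hpi : (p : ℕ) < i := by have := p.isLt; omega
  have hqi : (q : ℕ) < i := by have := q.isLt; omega
  have h1 := hINV [p, q] p q (IsLoopingWalk.base hadj) rfl (getLast?_pair p q)
    hpi hqi (by intro w hw; simp at hw)
  rw [lam_base] at h1
  have ha := abs_le.mp h1
  have hp := hPAR p hpi
  have hq := hPAR q hqi
  have hcol : colZ c p ≠ colZ c q ∧ (colZ c p = 0 ∨ colZ c p = 1)
      ∧ (colZ c q = 0 ∨ colZ c q = 1) := by
    have := hc p q hadj
    unfold colZ
    cases h1 : c p <;> cases h2 : c q <;> simp_all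
  have : f p - f q = 1 ∨ f p - f q = -1 := by omega
  unfold intPathAdj
  rcases this with h | h <;> rw [h] <;> norm_num

lemma sat_aux (hβ : ∀ v, β v = 1 ∨ β v = 2) {c : Fin m → Bool}
    (hc : ∀ u v, G.Adj u v → c u ≠ c v)
    (hNB : ∀ (Q : List (Fin m)) (u v : Fin m), IsLoopingWalk G Q → Q.head? = some u →
      Q.getLast? = some v → u < v → (β v : ℤ) - 2 < lamWalk β Q) :
    ∀ k i (f : Fin m → ℤ), m - i ≤ k →
      (∀ u : Fin m, (u : ℕ) < i → 2 ∣ (f u - colZ c u)) → Inv β G i f →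
      SatFrom β G intPathAdj i f := by
  intro k
  induction k with
  | zero =>
      intro i f hk hPAR hINV
      exact sat_end hc i f (by omega) hPAR hINV
  | succ k ih =>
      intro i f hk hPAR hINV
      by_cases him : i < m
      swap
      · exact sat_end hc i f him hPAR hINV
      rw [SatFrom, dif_pos him]
      have hvi : ((⟨i, him⟩ : Fin m) : ℕ) = i := rfl
      -- every constraint walk has λ ≥ β v - 1
      have hlow : ∀ u Q, Con G i ⟨i, him⟩ u Q → (β ⟨i, him⟩ : ℤ) - 1 ≤ lamWalk β Q := by
        rintro u Q ⟨hu, hQ, hor, hint⟩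
        have huv : u < (⟨i, him⟩ : Fin m) := show (u : ℕ) < i from hu
        rcases hor with ⟨h1, h2⟩ | ⟨h1, h2⟩
        · have := hNB Q u ⟨i, him⟩ hQ h1 h2 huv
          omega
        · have hrev := hNB Q.reverse u ⟨i, him⟩ (lw_reverse hQ)
            (by rw [List.head?_reverse]; exact h2)
            (by rw [List.getLast?_reverse]; exact h1) huv
          rw [lam_reverse hQ] at hrev
          omega
      -- parity of constraints
      have hpar : ∀ u Q, Con G i ⟨i, him⟩ u Q →
          2 ∣ (f u - lamWalk β Q - colZ c ⟨i, him⟩) := by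
        rintro u Q ⟨hu, hQ, hor, hint⟩
        have hPu := hPAR u hu
        have hLL := lam_length_parity β Q
        rcases hor with ⟨h1, h2⟩ | ⟨h1, h2⟩
        · have := lw_parity hc hQ h1 h2; omega
        · have := lw_parity hc hQ h1 h2; omega
      -- whatever value we choose, if it satisfies all constraints we can continue
      have hstep : ∀ b : ℤ, 2 ∣ (b - colZ c ⟨i, him⟩) →
          (∀ u Q, Con G i ⟨i, him⟩ u Q → |f u - b| ≤ lamWalk β Q) →
          SatFrom β G intPathAdj (i + 1) (Function.update f ⟨i, him⟩ b) := by
        intro b hbpar hbcon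
        refine ih (i + 1) _ (by omega) ?_ ?_
        · intro u hu
          by_cases hui : (u : ℕ) < i
          · rw [Function.update_of_ne (ne_mk him (by omega))]
            exact hPAR u hui
          · rw [eq_mk him (by omega : (u : ℕ) = i), Function.update_self]
            exact hbpar
        · intro Q u u' hQ h1 h2 hu hu' hint
          by_cases hui : (u : ℕ) < i <;> by_cases hui' : (u' : ℕ) < i
          · rw [Function.update_of_ne (ne_mk him (by omega)),
              Function.update_of_ne (ne_mk him (by omega))]
            exact hINV Q u u' hQ h1 h2 hui hui'
              (fun w hw => by have := hint w hw; omega)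
          · have he : u' = ⟨i, him⟩ := eq_mk him (by omega)
            have hC : Con G i ⟨i, him⟩ u Q :=
              ⟨hui, hQ, Or.inl ⟨h1, by rw [← he]; exact h2⟩, hint⟩
            rw [Function.update_of_ne (ne_mk him (by omega)), he, Function.update_self]
            exact hbcon u Q hC
          · have he : u = ⟨i, him⟩ := eq_mk him (by omega)
            have hC : Con G i ⟨i, him⟩ u' Q :=
              ⟨hui', hQ, Or.inr ⟨by rw [← he]; exact h1, h2⟩, hint⟩
            rw [he, Function.update_self,
              Function.update_of_ne (ne_mk him (by omega)), abs_sub_comm]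
            exact hbcon u' Q hC
          · exfalso
            have he : u = ⟨i, him⟩ := eq_mk him (by omega)
            have he' : u' = ⟨i, him⟩ := eq_mk him (by omega)
            exact lw_head_ne_last hQ h1 h2 (by rw [he, he'])
      by_cases hex : ∃ u Q, Con G i ⟨i, him⟩ u Q
      · -- there are constraints : take the maximum lower bound
        obtain ⟨u₀w, Q₀w, hC0⟩ := hex
        have hm0 : (Finset.univ : Finset (Fin m)).Nonempty := ⟨⟨i, him⟩, Finset.mem_univ _⟩
        obtain ⟨Mf, hMf⟩ : ∃ Mf : ℤ, ∀ u : Fin m, |f u| ≤ Mf := by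
          have hne2 : (Finset.univ.image (fun u : Fin m => |f u|)).Nonempty :=
            hm0.image (fun u : Fin m => |f u|)
          use (Finset.univ.image (fun u : Fin m => |f u|)).max' hne2
          intro u
          exact Finset.le_max' (Finset.univ.image (fun u : Fin m => |f u|)) (|f u|)
            (Finset.mem_image_of_mem (fun u : Fin m => |f u|) (Finset.mem_univ u))
        obtain ⟨L, ⟨u₀, Q₀, hC₀, hLdef⟩, hLmax⟩ :=
          Int.exists_greatest_of_bdd
            (P := fun t => ∃ u Q, Con G i ⟨i, him⟩ u Q ∧ t = f u - lamWalk β Q)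
            ⟨Mf, by
              rintro t ⟨u, Q, hC, rfl⟩
              have hl := hlow u Q hC
              have hb := abs_le.mp (hMf u)
              have := hβ ⟨i, him⟩
              omega⟩
            ⟨_, u₀w, Q₀w, hC0, rfl⟩
        obtain ⟨U, ⟨u₁, Q₁, hC₁, hUdef⟩, hUmin⟩ :=
          Int.exists_least_of_bdd
            (P := fun t => ∃ u Q, Con G i ⟨i, him⟩ u Q ∧ t = f u + lamWalk β Q)
            ⟨-Mf, by
              rintro t ⟨u, Q, hC, rfl⟩
              have hl := hlow u Q hC
              have hb := abs_le.mp (hMf u)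
              have := hβ ⟨i, him⟩
              omega⟩
            ⟨_, u₀w, Q₀w, hC0, rfl⟩
        have hwin : L + 2 * ((β ⟨i, him⟩ : ℤ) - 1) ≤ U := by
          by_cases heq : u₀ = u₁
          · subst heq
            have := hlow u₀ Q₀ hC₀
            have := hlow u₀ Q₁ hC₁
            omega
          · have := con_combine hvi hINV hC₀ hC₁ heq
            omega
        have hparL : 2 ∣ (L - colZ c ⟨i, him⟩) := by
          have := hpar u₀ Q₀ hC₀
          omega
        have hok : ∀ b : ℤ, L ≤ b → b ≤ L + 2 * ((β ⟨i, him⟩ : ℤ) - 1) →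
            ∀ u Q, Con G i ⟨i, him⟩ u Q → |f u - b| ≤ lamWalk β Q := by
          intro b hb1 hb2 u Q hC
          have hl' := hLmax (f u - lamWalk β Q) ⟨u, Q, hC, rfl⟩
          have hu' := hUmin (f u + lamWalk β Q) ⟨u, Q, hC, rfl⟩
          rw [abs_le]
          omega
        rcases hβ ⟨i, him⟩ with h1 | h2
        · refine ⟨{L}, by simp [h1], ?_⟩
          intro b hb
          simp only [Finset.mem_singleton] at hb
          rw [hb]
          exact hstep L hparL (hok L le_rfl (by omega))
        · refine ⟨{L, L + 2}, ?_, ?_⟩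
          · rw [Finset.card_insert_of_notMem (by simp only [Finset.mem_singleton]; omega),
              Finset.card_singleton, h2]
          · intro b hb
            rcases Finset.mem_insert.mp hb with rfl | hb'
            · exact hstep b hparL (hok b le_rfl (by omega))
            · simp only [Finset.mem_singleton] at hb'
              rw [hb']
              exact hstep _ (by omega) (hok _ (by omega) (by omega))
      · -- no constraints : any value of the right parity will do
        have hnone : ∀ u Q, Con G i ⟨i, him⟩ u Q → False := by
          intro u Q hC; exact hex ⟨u, Q, hC⟩
        rcases hβ ⟨i, him⟩ with h1 | h2
        · refine ⟨{colZ c ⟨i, him⟩}, by simp [h1], ?_⟩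
          intro b hb
          simp only [Finset.mem_singleton] at hb
          subst hb
          exact hstep _ (by omega) (fun u Q hC => absurd (hnone u Q hC) not_false)
        · refine ⟨{colZ c ⟨i, him⟩, colZ c ⟨i, him⟩ + 2}, ?_, ?_⟩
          · rw [Finset.card_insert_of_notMem (by simp only [Finset.mem_singleton]; omega),
              Finset.card_singleton, h2]
          · intro b hb
            rcases Finset.mem_insert.mp hb with rfl | hb'
            · exact hstep _ (by omega) (fun u Q hC => absurd (hnone u Q hC) not_false)
            · simp only [Finset.mem_singleton] at hb'
              subst hb'
              exact hstep _ (by omega) (fun u Q hC => absurd (hnone u Q hC) not_false)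

end DirTwo
/-- Let `Ψ` be an instance of `{1,2}`-CSP whose constraint graph `G` is
bipartite.  Then `P_∞ ⊨ Ψ` if and only if `G` contains no bad walk, i.e. no looping walk
`Q = x₁,…,x_r` with `x₁ ≺ x_r` and `λ(Q) ≤ β(x_r) − 2`. -/
theorem infinitePath_sat_iff_no_bad_walk {m : ℕ} (β : Fin m → ℕ)
    (hβ : ∀ v, β v = 1 ∨ β v = 2) (G : SimpleGraph (Fin m)) (hbip : Bipartite G) :
    Sat β G intPathAdj ↔
      ¬ ∃ (Q : List (Fin m)) (u v : Fin m), IsLoopingWalk G Q ∧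
        Q.head? = some u ∧ Q.getLast? = some v ∧ u < v ∧
        lamWalk β Q ≤ (β v : ℤ) - 2 := by
  obtain ⟨c, hc⟩ := hbip
  constructor
  · intro hsat
    rintro ⟨Q, u, v, hQ, hh, hl, huv, hlam⟩
    exact dir1 hβ hQ hh hl huv hlam m 0 (fun _ => 0) (by omega) (by omega)
      (hsat (fun _ => 0))
  · intro hNB' f
    have hNB : ∀ (Q : List (Fin m)) (u v : Fin m), IsLoopingWalk G Q → Q.head? = some u →
        Q.getLast? = some v → u < v → (β v : ℤ) - 2 < lamWalk β Q := by
      intro Q u v h1 h2 h3 h4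
      by_contra hle
      exact hNB' ⟨Q, u, v, h1, h2, h3, h4, by omega⟩
    refine sat_aux hβ hc hNB m 0 f (by omega) ?_ ?_
    · intro u hu
      exact absurd hu (Nat.not_lt_zero _)
    · intro Q u u' _ _ _ hu _ _
      exact absurd hu (Nat.not_lt_zero _)

end CountingCSP
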